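/- Define μ₂(x,y) = BCH(x, (1/2)·BCH(-x,y)). Then μ₂(-x,-y) = -μ₂(x,y). -/

import Mathlib

/-- Noncommutative formal power series in `n` variables over `ℚ`:
the completed free associative algebra, given by coefficient functions on words. -/
abbrev NC (n : ℕ) := List (Fin n) → ℚ

namespace NC
variable {n : ℕ}

/-- Pointwise addition. -/
def add (f g : NC n) : NC n := fun w => f w + g w

/-- Pointwise negation. -/
def neg (f : NC n) : NC n := fun w => - f w

/-- Pointwise subtraction. -/
def sub (f g : NC n) : NC n := fun w => f w - g w

/-- Scalar multiplication. -/
def smul (q : ℚ) (f : NC n) : NC n := fun w => q * f w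

/-- The zero series. -/
def zero : NC n := fun _ => 0

/-- The unit series. -/
def one : NC n := fun w => if w = [] then 1 else 0

/-- The `i`-th generator (noncommuting indeterminate). -/
def X (i : Fin n) : NC n := fun w => if w = [i] then 1 else 0

/-- The Cauchy (concatenation) product of noncommutative series. -/
def mul (f g : NC n) : NC n :=
  fun w => ∑ k ∈ Finset.range (w.length + 1), f (w.take k) * g (w.drop k)

/-- Powers. -/
def pow (f : NC n) : ℕ → NC n
  | 0 => one
  | k + 1 => mul f (pow f k)

/-- The Lie bracket `[f,g] = fg - gf`. -/
def br (f g : NC n) : NC n := sub (mul f g) (mul g f)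

/-- The formal exponential; for a series with zero constant term all but finitely
many terms contribute to each coefficient, so this truncated sum is exact. -/
def exp (f : NC n) : NC n :=
  fun w => ∑ k ∈ Finset.range (w.length + 1), (k.factorial : ℚ)⁻¹ * pow f k w

/-- The formal logarithm; exact on series with constant term `1`. -/
def log (g : NC n) : NC n :=
  fun w => ∑ k ∈ Finset.range (w.length + 1),
    (-1 : ℚ) ^ (k + 1) * (k : ℚ)⁻¹ * pow (sub g one) k w

/-- The Baker–Campbell–Hausdorff series: the unique formal series with
`exp f * exp g = exp (bch f g)`. -/
def bch (f g : NC n) : NC n := log (mul (exp f) (exp g))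

/-- `μ₂(x,y) = BCH(x, ½·BCH(-x,y))`. -/
def mu2 (f g : NC n) : NC n := bch f (smul (1/2) (bch (neg f) g))

/-- Iterated (multi-argument) BCH: `BCH(x₁,…,xₙ) = BCH(x₁, BCH(x₂,…,xₙ))`. -/
def bchList : List (NC n) → NC n
  | [] => zero
  | f :: l => bch f (bchList l)

/-- Truncation: projection onto the span of words of length `≤ d`
(Lie monomials with at most `d - 1` brackets). -/
def trunc (d : ℕ) (f : NC n) : NC n :=
  fun w => if w.length ≤ d then f w else 0

/-- `exp(ad_f)` applied to `g`, i.e. `Σ_k ad_f^k(g)/k!`; for `f` with zero constant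
term all but finitely many terms contribute to each coefficient. -/
def expAd (f g : NC n) : NC n :=
  fun w => ∑ k ∈ Finset.range (w.length + 1),
    (k.factorial : ℚ)⁻¹ * ((fun z => br f z)^[k] g) w

end NC

namespace NC
variable {n : ℕ}

/-- Type synonym carrying the Cauchy-product ring structure. -/
def A (n : ℕ) : Type := NC n

instance : AddCommGroup (A n) := inferInstanceAs (AddCommGroup (List (Fin n) → ℚ))

theorem mul_apply (f g : NC n) (w : List (Fin n)) :
    mul f g w = ∑ k ∈ Finset.range (w.length + 1), f (w.take k) * g (w.drop k) := rfl

theorem cauchy_assoc (f g h : NC n) : mul (mul f g) h = mul f (mul g h) := by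
  funext w
  set N := w.length with hN
  have L : mul (mul f g) h w
      = ∑ p ∈ (Finset.range (N+1)).sigma (fun i => Finset.range (i+1)),
          f (w.take p.2) * g ((w.drop p.2).take (p.1 - p.2)) * h (w.drop p.1) := by
    rw [Finset.sum_sigma]
    rw [mul_apply]
    refine Finset.sum_congr rfl ?_
    intro i hi
    rw [Finset.mem_range] at hi
    have hiN : i ≤ N := Nat.lt_succ_iff.mp hi
    rw [mul_apply, Finset.sum_mul]
    have hlen : (w.take i).length = i := by
      simp [hN, Nat.min_eq_left hiN]; omega
    rw [hlen]
    refine Finset.sum_congr rfl ?_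
    intro j hj
    rw [Finset.mem_range] at hj
    have hji : j ≤ i := Nat.lt_succ_iff.mp hj
    congr 2
    · rw [List.take_take, Nat.min_eq_left hji]
    · rw [List.drop_take]
  have R : mul f (mul g h) w
      = ∑ p ∈ (Finset.range (N+1)).sigma (fun j => Finset.range (N - j + 1)),
          f (w.take p.1) * g ((w.drop p.1).take p.2) * h (w.drop (p.1 + p.2)) := by
    rw [Finset.sum_sigma]
    rw [mul_apply]
    refine Finset.sum_congr rfl ?_
    intro j hj
    rw [Finset.mem_range] at hj
    have hjN : j ≤ N := Nat.lt_succ_iff.mp hj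
    rw [mul_apply, Finset.mul_sum]
    have hlen : (w.drop j).length = N - j := by simp [hN]
    rw [hlen]
    refine Finset.sum_congr rfl ?_
    intro m hm
    rw [mul_assoc]
    congr 2
    rw [List.drop_drop]
  rw [L, R]
  refine Finset.sum_nbij' (fun p => ⟨p.2, p.1 - p.2⟩) (fun p => ⟨p.1 + p.2, p.1⟩) ?_ ?_ ?_ ?_ ?_
  · rintro ⟨i, j⟩ hp
    simp only [Finset.mem_sigma, Finset.mem_range] at hp ⊢
    omega
  · rintro ⟨j, m⟩ hp
    simp only [Finset.mem_sigma, Finset.mem_range] at hp ⊢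
    omega
  · rintro ⟨i, j⟩ hp
    simp only [Finset.mem_sigma, Finset.mem_range] at hp
    have h1 : j + (i - j) = i := by omega
    simp only [Sigma.mk.inj_iff, h1, heq_eq_eq, and_self]
  · rintro ⟨j, m⟩ hp
    simp only [Finset.mem_sigma, Finset.mem_range] at hp
    have h1 : j + m - j = m := by omega
    simp only [Sigma.mk.inj_iff, h1, heq_eq_eq, and_self]
  · rintro ⟨i, j⟩ hp
    simp only [Finset.mem_sigma, Finset.mem_range] at hp
    have h1 : j + (i - j) = i := by omega
    simp only [h1]

theorem cauchy_one_mul (f : NC n) : mul one f = f := by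
  funext w
  rw [mul_apply]
  rw [Finset.sum_eq_single 0]
  · simp [one]
  · intro b hb hb0
    rw [Finset.mem_range] at hb
    have : w.take b ≠ [] := by
      intro hemp
      have h1 : (w.take b).length = 0 := by rw [hemp]; rfl
      rw [List.length_take] at h1
      omega
    simp [one, this]
  · intro habs
    simp at habs

theorem cauchy_mul_one (f : NC n) : mul f one = f := by
  funext w
  rw [mul_apply]
  rw [Finset.sum_eq_single w.length]
  · simp [one]
  · intro b hb hb0
    rw [Finset.mem_range] at hb
    have : w.drop b ≠ [] := by
      intro hemp
      have h1 : (w.drop b).length = 0 := by rw [hemp]; rfl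
      rw [List.length_drop] at h1
      omega
    simp [one, this]
  · intro habs
    simp at habs

theorem cauchy_left_distrib (f g h : NC n) : mul f (add g h) = add (mul f g) (mul f h) := by
  funext w
  simp [mul_apply, add, mul_add, Finset.sum_add_distrib]

theorem cauchy_right_distrib (f g h : NC n) : mul (add f g) h = add (mul f h) (mul g h) := by
  funext w
  simp [mul_apply, add, add_mul, Finset.sum_add_distrib]

theorem cauchy_zero_mul (f : NC n) : mul zero f = zero := by
  funext w; simp [mul_apply, zero]

theorem cauchy_mul_zero (f : NC n) : mul f zero = zero := by
  funext w; simp [mul_apply, zero]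

instance : Ring (A n) :=
  { (inferInstance : AddCommGroup (A n)) with
    mul := NC.mul
    one := NC.one
    mul_assoc := cauchy_assoc
    one_mul := cauchy_one_mul
    mul_one := cauchy_mul_one
    left_distrib := cauchy_left_distrib
    right_distrib := cauchy_right_distrib
    zero_mul := cauchy_zero_mul
    mul_zero := cauchy_mul_zero }

theorem A_mul_def (f g : A n) : f * g = NC.mul f g := rfl
theorem A_one_def : (1 : A n) = NC.one := rfl
theorem A_zero_def : (0 : A n) = NC.zero := by
  funext w; rfl
theorem A_add_def (f g : A n) : f + g = NC.add f g := rfl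
theorem A_neg_def (f : A n) : -f = NC.neg f := rfl
theorem A_sub_def (f g : A n) : f - g = NC.sub f g := by
  funext w
  show f w - g w = _
  rfl

theorem pow_eq (f : A n) : ∀ k : ℕ, NC.pow f k = f ^ k
  | 0 => by rw [pow_zero]; rfl
  | k + 1 => by
      rw [pow_succ']
      show NC.mul f (NC.pow f k) = f * f ^ k
      rw [pow_eq f k, A_mul_def]

end NC
namespace NC
variable {n : ℕ}

open PowerSeries

/-- coefficient vanishing of powers of a series with zero constant term -/
theorem pow_apply_eq_zero {h : A n} (hZ : h [] = 0) :
    ∀ (k : ℕ) (w : List (Fin n)), w.length < k → (h ^ k) w = 0 := by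
  intro k
  induction k with
  | zero => intro w hw; omega
  | succ k ih =>
    intro w hw
    erw [pow_succ', A_mul_def, mul_apply]
    refine Finset.sum_eq_zero ?_
    intro i hi
    rw [Finset.mem_range] at hi
    rcases Nat.eq_zero_or_pos i with h0 | h0
    · subst h0
      simp only [List.take_zero]
      rw [hZ, zero_mul]
    · have : (w.drop i).length < k := by
        rw [List.length_drop]; omega
      rw [ih _ this, mul_zero]

/-- Evaluation of a univariate power series at `h`. -/
noncomputable def ev (h : A n) (P : ℚ⟦X⟧) : A n :=
  fun w => ∑ k ∈ Finset.range (w.length + 1), (coeff k P) * (h ^ k) w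

theorem ev_apply (h : A n) (P : ℚ⟦X⟧) (w : List (Fin n)) :
    ev h P w = ∑ k ∈ Finset.range (w.length + 1), (coeff k P) * (h ^ k) w := rfl

theorem ev_stable {h : A n} (hZ : h [] = 0) (P : ℚ⟦X⟧) (w : List (Fin n))
    {N : ℕ} (hN : w.length < N) :
    ev h P w = ∑ k ∈ Finset.range N, (coeff k P) * (h ^ k) w := by
  rw [ev_apply]
  refine Finset.sum_subset ?_ ?_
  · intro k hk
    rw [Finset.mem_range] at *
    omega
  · intro k hk hk'
    rw [Finset.mem_range] at hk'
    push_neg at hk'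
    rw [pow_apply_eq_zero hZ k w (by omega), mul_zero]

theorem ev_one (h : A n) : ev h 1 = 1 := by
  funext w
  rw [ev_apply, Finset.sum_eq_single 0]
  · simp
  · intro b hb hb0
    rw [coeff_one, if_neg hb0, zero_mul]
  · intro habs
    simp at habs

theorem ev_X {h : A n} (hZ : h [] = 0) : ev h (PowerSeries.X : ℚ⟦X⟧) = h := by
  funext w
  rw [ev_apply, Finset.sum_eq_single 1]
  · rw [PowerSeries.coeff_X, if_pos rfl, one_mul, pow_one]
  · intro b hb hb0
    rw [PowerSeries.coeff_X, if_neg hb0, zero_mul]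
  · intro h1
    rw [Finset.mem_range] at h1
    have hw : w.length = 0 := by omega
    have hwnil : w = [] := List.length_eq_zero_iff.mp hw
    subst hwnil
    rw [pow_one, hZ, mul_zero]

theorem ev_add (h : A n) (P Q : ℚ⟦X⟧) : ev h (P + Q) = ev h P + ev h Q := by
  funext w
  show ev h (P+Q) w = ev h P w + ev h Q w
  rw [ev_apply, ev_apply, ev_apply, ← Finset.sum_add_distrib]
  refine Finset.sum_congr rfl ?_
  intro k _
  rw [map_add, add_mul]

theorem ev_mul {h : A n} (hZ : h [] = 0) (P Q : ℚ⟦X⟧) :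
    ev h (P * Q) = ev h P * ev h Q := by
  funext w
  set N := w.length with hN
  have key : ∀ i ∈ Finset.range (N + 1),
      (ev h P) (w.take i) * (ev h Q) (w.drop i)
        = ∑ k ∈ Finset.range (N+1), ∑ l ∈ Finset.range (N+1),
            (coeff k P) * (coeff l Q) * ((h ^ k) (w.take i) * (h ^ l) (w.drop i)) := by
    intro i hi
    rw [Finset.mem_range] at hi
    rw [ev_stable hZ P (w.take i) (N := N+1) (by rw [List.length_take]; omega),
        ev_stable hZ Q (w.drop i) (N := N+1) (by rw [List.length_drop]; omega)]
    rw [Finset.sum_mul_sum]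
    refine Finset.sum_congr rfl fun k _ => Finset.sum_congr rfl fun l _ => by ring
  have R : (ev h P * ev h Q) w
      = ∑ k ∈ Finset.range (N+1), ∑ l ∈ Finset.range (N+1),
          (coeff k P) * (coeff l Q) * (h ^ (k + l)) w := by
    erw [A_mul_def, mul_apply]
    rw [Finset.sum_congr rfl key]
    rw [Finset.sum_comm]
    refine Finset.sum_congr rfl ?_
    intro k _
    rw [Finset.sum_comm]
    refine Finset.sum_congr rfl ?_
    intro l _
    rw [← Finset.mul_sum]
    congr 1
    erw [pow_add, A_mul_def, mul_apply]
  rw [R]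
  -- now the LHS
  rw [ev_apply]
  have L : ∀ m ∈ Finset.range (N+1),
      (coeff m (P * Q)) * (h ^ m) w
        = ∑ p ∈ Finset.HasAntidiagonal.antidiagonal m, (coeff p.1 P) * (coeff p.2 Q) * (h ^ m) w := by
    intro m _
    rw [coeff_mul, Finset.sum_mul]
  rw [Finset.sum_congr rfl L]
  -- both sides are sums over pairs
  rw [Finset.sum_sigma']
  have hsplit : (Finset.range (N+1)).sum
      (fun k => (Finset.range (N+1)).sum
        (fun l => (coeff k P) * (coeff l Q) * (h ^ (k + l)) w))
      = ∑ p ∈ (Finset.range (N+1) ×ˢ Finset.range (N+1)).filter (fun p => p.1 + p.2 ≤ N),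
          (coeff p.1 P) * (coeff p.2 Q) * (h ^ (p.1 + p.2)) w := by
    rw [← Finset.sum_product']
    rw [← Finset.sum_filter_add_sum_filter_not (Finset.range (N+1) ×ˢ Finset.range (N+1))
        (fun p => p.1 + p.2 ≤ N)]
    have : ∑ p ∈ (Finset.range (N+1) ×ˢ Finset.range (N+1)).filter (fun p => ¬ p.1 + p.2 ≤ N),
        (coeff p.1 P) * (coeff p.2 Q) * (h ^ (p.1 + p.2)) w = 0 := by
      refine Finset.sum_eq_zero ?_
      intro p hp
      rw [Finset.mem_filter] at hp
      rw [pow_apply_eq_zero hZ _ w (by omega), mul_zero]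
    rw [this, add_zero]
  rw [hsplit]
  refine Finset.sum_nbij' (fun p => p.2) (fun q => ⟨q.1 + q.2, q⟩) ?_ ?_ ?_ ?_ ?_
  · rintro ⟨m, j, l⟩ hp
    simp only [Finset.mem_sigma, Finset.mem_range, Finset.HasAntidiagonal.mem_antidiagonal,
      Finset.mem_filter, Finset.mem_product] at hp ⊢
    omega
  · rintro ⟨k, l⟩ hp
    simp only [Finset.mem_sigma, Finset.mem_range, Finset.HasAntidiagonal.mem_antidiagonal,
      Finset.mem_filter, Finset.mem_product] at hp ⊢
    exact ⟨by omega, trivial⟩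
  · rintro ⟨m, j, l⟩ hp
    simp only [Finset.mem_sigma, Finset.mem_range, Finset.HasAntidiagonal.mem_antidiagonal] at hp
    simp only [Sigma.mk.inj_iff, hp.2, heq_eq_eq, and_self]
  · rintro ⟨k, l⟩ hp
    rfl
  · rintro ⟨m, j, l⟩ hp
    simp only [Finset.mem_sigma, Finset.mem_range, Finset.HasAntidiagonal.mem_antidiagonal] at hp
    simp only [← hp.2]

theorem ev_pow {h : A n} (hZ : h [] = 0) (Q : ℚ⟦X⟧) (k : ℕ) :
    ev h (Q ^ k) = (ev h Q) ^ k := by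
  induction k with
  | zero => rw [pow_zero, pow_zero, ev_one]
  | succ k ih => rw [pow_succ, pow_succ, ev_mul hZ, ih]

theorem ev_nil {h : A n} (P : ℚ⟦X⟧) : ev h P [] = constantCoeff P := by
  rw [ev_apply]
  simp only [List.length_nil, zero_add, Finset.range_one, Finset.sum_singleton]
  rw [pow_zero]
  have : (1 : A n) [] = 1 := by
    show NC.one [] = 1
    simp [NC.one]
  rw [this, mul_one, coeff_zero_eq_constantCoeff]

end NC
namespace NCPS

open PowerSeries

/-- Composition of power series (second argument must have zero constant term). -/
noncomputable def comp (P Q : ℚ⟦X⟧) : ℚ⟦X⟧ :=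
  PowerSeries.mk fun m => ∑ k ∈ Finset.range (m + 1), (coeff k P) * (coeff m (Q ^ k))

theorem coeff_comp (P Q : ℚ⟦X⟧) (m : ℕ) :
    coeff m (comp P Q) = ∑ k ∈ Finset.range (m + 1), (coeff k P) * (coeff m (Q ^ k)) :=
  coeff_mk _ _

theorem coeff_pow_eq_zero {Q : ℚ⟦X⟧} (hQ : constantCoeff Q = 0) {m k : ℕ} (h : m < k) :
    coeff m (Q ^ k) = 0 := by
  have h1 : (X : ℚ⟦X⟧) ∣ Q := X_dvd_iff.mpr hQ
  have h2 : (X : ℚ⟦X⟧) ^ k ∣ Q ^ k := pow_dvd_pow_of_dvd h1 k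
  exact (X_pow_dvd_iff.mp h2) m h

theorem coeff_comp_stable {Q : ℚ⟦X⟧} (hQ : constantCoeff Q = 0) (P : ℚ⟦X⟧) {m N : ℕ}
    (h : m < N) :
    coeff m (comp P Q) = ∑ k ∈ Finset.range N, (coeff k P) * (coeff m (Q ^ k)) := by
  rw [coeff_comp]
  refine Finset.sum_subset ?_ ?_
  · intro k hk; rw [Finset.mem_range] at *; omega
  · intro k hk hk'
    rw [Finset.mem_range] at hk'
    push_neg at hk'
    rw [coeff_pow_eq_zero hQ (by omega), mul_zero]

theorem comp_add (P P' Q : ℚ⟦X⟧) : comp (P + P') Q = comp P Q + comp P' Q := by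
  ext m
  rw [map_add, coeff_comp, coeff_comp, coeff_comp, ← Finset.sum_add_distrib]
  exact Finset.sum_congr rfl fun k _ => by rw [map_add, add_mul]

theorem comp_one (Q : ℚ⟦X⟧) : comp 1 Q = 1 := by
  ext m
  rw [coeff_comp, Finset.sum_eq_single 0]
  · simp
  · intro b hb hb0
    rw [coeff_one, if_neg hb0, zero_mul]
  · intro habs; simp at habs

theorem comp_X_mul {Q : ℚ⟦X⟧} (hQ : constantCoeff Q = 0) (P : ℚ⟦X⟧) :
    comp (X * P) Q = Q * comp P Q := by
  ext m
  rw [coeff_comp]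
  rw [Finset.sum_range_succ']
  simp only [coeff_succ_X_mul, coeff_zero_X_mul, zero_mul, add_zero]
  have key : ∀ i, (coeff i P) * (coeff m (Q ^ (i + 1)))
      = (coeff i P) * (coeff m (Q * Q ^ i)) := by
    intro i; rw [pow_succ']
  rw [Finset.sum_congr rfl fun i _ => key i]
  -- RHS
  rw [PowerSeries.coeff_mul]
  have : ∀ p ∈ Finset.HasAntidiagonal.antidiagonal m,
      (coeff p.1 Q) * (coeff p.2 (comp P Q))
        = ∑ j ∈ Finset.range (m + 1), (coeff j P) * ((coeff p.1 Q) * (coeff p.2 (Q ^ j))) := by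
    intro p hp
    rw [Finset.HasAntidiagonal.mem_antidiagonal] at hp
    rw [coeff_comp_stable hQ P (N := m + 1) (by omega), Finset.mul_sum]
    exact Finset.sum_congr rfl fun j _ => by ring
  rw [Finset.sum_congr rfl this, Finset.sum_comm]
  -- now: ∑ j, ∑ p in antidiagonal, P_j * (Q_{p1} * (Q^j)_{p2}) ; and coeff m (Q * Q^j)
  have : ∀ j ∈ Finset.range (m+1),
      ∑ p ∈ Finset.HasAntidiagonal.antidiagonal m, (coeff j P) * ((coeff p.1 Q) * (coeff p.2 (Q ^ j)))
        = (coeff j P) * (coeff m (Q * Q ^ j)) := by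
    intro j _
    rw [PowerSeries.coeff_mul, Finset.mul_sum]
  rw [Finset.sum_congr rfl this]
  rw [Finset.sum_range_succ, ← pow_succ', coeff_pow_eq_zero hQ (by omega), mul_zero, add_zero]

theorem derivative_comp {Q : ℚ⟦X⟧} (hQ : constantCoeff Q = 0) (P : ℚ⟦X⟧) :
    d⁄dX ℚ (comp P Q) = (d⁄dX ℚ Q) * comp (d⁄dX ℚ P) Q := by
  ext m
  have hL : coeff m (d⁄dX ℚ (comp P Q))
      = ∑ j ∈ Finset.range (m+1), coeff j (d⁄dX ℚ P) * coeff m (Q ^ j * d⁄dX ℚ Q) := by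
    rw [coeff_derivative, coeff_comp, Finset.sum_mul]
    have step : ∀ k ∈ Finset.range (m+2),
        coeff k P * coeff (m+1) (Q ^ k) * ((m:ℚ)+1)
          = coeff k P * ((k:ℚ) * coeff m (Q ^ (k-1) * d⁄dX ℚ Q)) := by
      intro k _
      have h3 : coeff (m+1) (Q ^ k) * ((m:ℚ)+1) = coeff m (d⁄dX ℚ (Q ^ k)) :=
        (coeff_derivative _ m).symm
      have h4 : coeff m (d⁄dX ℚ (Q ^ k)) = (k:ℚ) * coeff m (Q ^ (k-1) * d⁄dX ℚ Q) := by
        rw [Derivation.leibniz_pow, smul_eq_mul, map_nsmul, nsmul_eq_mul]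
      rw [mul_assoc, h3, h4]
    rw [Finset.sum_congr rfl step, Finset.sum_range_succ']
    simp only [Nat.cast_zero, zero_mul, mul_zero, add_zero]
    refine Finset.sum_congr rfl ?_
    intro i _
    have h5 : i + 1 - 1 = i := rfl
    rw [h5, coeff_derivative]
    push_cast
    ring
  have hR : coeff m ((d⁄dX ℚ Q) * comp (d⁄dX ℚ P) Q)
      = ∑ j ∈ Finset.range (m+1), coeff j (d⁄dX ℚ P) * coeff m (Q ^ j * d⁄dX ℚ Q) := by
    rw [PowerSeries.coeff_mul]
    have step : ∀ p ∈ Finset.HasAntidiagonal.antidiagonal m,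
        (coeff p.1 (d⁄dX ℚ Q)) * (coeff p.2 (comp (d⁄dX ℚ P) Q))
          = ∑ j ∈ Finset.range (m + 1),
              (coeff j (d⁄dX ℚ P)) * ((coeff p.2 (Q ^ j)) * (coeff p.1 (d⁄dX ℚ Q))) := by
      intro p hp
      rw [Finset.HasAntidiagonal.mem_antidiagonal] at hp
      rw [coeff_comp_stable hQ _ (N := m + 1) (by omega), Finset.mul_sum]
      exact Finset.sum_congr rfl fun j _ => by ring
    rw [Finset.sum_congr rfl step, Finset.sum_comm]
    refine Finset.sum_congr rfl ?_
    intro j _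
    rw [← Finset.mul_sum]
    congr 1
    rw [PowerSeries.coeff_mul]
    refine Finset.sum_nbij' (fun p => (p.2, p.1)) (fun p => (p.2, p.1)) ?_ ?_ ?_ ?_ ?_
    · rintro ⟨u, v⟩ hp
      simp only [Finset.HasAntidiagonal.mem_antidiagonal] at hp ⊢
      omega
    · rintro ⟨u, v⟩ hp
      simp only [Finset.HasAntidiagonal.mem_antidiagonal] at hp ⊢
      omega
    · rintro ⟨u, v⟩ _; rfl
    · rintro ⟨u, v⟩ _; rfl
    · rintro ⟨u, v⟩ _; rfl
  rw [hL, hR]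

end NCPS
namespace NCPS

open PowerSeries

noncomputable def E : ℚ⟦X⟧ := PowerSeries.mk fun k => ((k.factorial : ℚ))⁻¹

noncomputable def L : ℚ⟦X⟧ := PowerSeries.mk fun k => (-1 : ℚ) ^ (k + 1) * (k : ℚ)⁻¹

noncomputable def E1 : ℚ⟦X⟧ := E - 1

theorem coeff_E (k : ℕ) : coeff k E = ((k.factorial : ℚ))⁻¹ := coeff_mk _ _
theorem coeff_L (k : ℕ) : coeff k L = (-1 : ℚ) ^ (k + 1) * (k : ℚ)⁻¹ := coeff_mk _ _

theorem constantCoeff_L : constantCoeff L = 0 := by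
  rw [← coeff_zero_eq_constantCoeff, coeff_L]
  norm_num

theorem constantCoeff_E : constantCoeff E = 1 := by
  rw [← coeff_zero_eq_constantCoeff, coeff_E]
  norm_num

theorem constantCoeff_E1 : constantCoeff E1 = 0 := by
  rw [E1, map_sub, constantCoeff_E, map_one, sub_self]

theorem coeff_E1 (k : ℕ) :
    coeff k E1 = if k = 0 then 0 else ((k.factorial : ℚ))⁻¹ := by
  rw [E1, map_sub, coeff_E, coeff_one]
  split_ifs with h
  · subst h; norm_num
  · rw [sub_zero]

theorem deriv_E : d⁄dX ℚ E = E := by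
  ext m
  rw [coeff_derivative, coeff_E, coeff_E, Nat.factorial_succ]
  have h1 : ((m+1).factorial : ℚ) ≠ 0 := Nat.cast_ne_zero.mpr (Nat.factorial_ne_zero _)
  have h2 : ((m).factorial : ℚ) ≠ 0 := Nat.cast_ne_zero.mpr (Nat.factorial_ne_zero _)
  field_simp
  try push_cast
  try ring

theorem deriv_E1 : d⁄dX ℚ E1 = E := by
  rw [E1]
  rw [map_sub]
  rw [deriv_E]
  have : d⁄dX ℚ (1 : ℚ⟦X⟧) = 0 := Derivation.map_one_eq_zero _
  rw [this, sub_zero]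

theorem coeff_deriv_L (m : ℕ) : coeff m (d⁄dX ℚ L) = (-1 : ℚ) ^ m := by
  rw [coeff_derivative, coeff_L]
  have h1 : ((m : ℚ) + 1) ≠ 0 := by positivity
  have : ((m + 1 : ℕ) : ℚ) = (m : ℚ) + 1 := by push_cast; ring
  rw [this]
  field_simp
  ring

theorem one_add_X_mul_deriv_L : ((1 + X) : ℚ⟦X⟧) * d⁄dX ℚ L = 1 := by
  ext m
  rw [add_mul, one_mul, map_add]
  cases m with
  | zero =>
    rw [coeff_deriv_L, coeff_zero_X_mul, coeff_zero_eq_constantCoeff, map_one]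
    norm_num
  | succ m =>
    rw [coeff_deriv_L, coeff_succ_X_mul, coeff_deriv_L, coeff_one]
    rw [pow_succ]
    simp

theorem comp_E_L : comp E L = 1 + X := by
  have hF0 : constantCoeff (comp E L) = 1 := by
    rw [← coeff_zero_eq_constantCoeff, coeff_comp]
    simp [coeff_E]
  have hDF : d⁄dX ℚ (comp E L) = d⁄dX ℚ L * comp E L := by
    rw [derivative_comp constantCoeff_L, deriv_E]
  have heq : (1 + X) * d⁄dX ℚ (comp E L) = comp E L := by
    rw [hDF, ← mul_assoc, one_add_X_mul_deriv_L, one_mul]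
  set F := comp E L with hF
  -- coefficient recursion
  have hc : ∀ m : ℕ, coeff m ((1 + X) * d⁄dX ℚ F) = coeff m F := fun m => by rw [heq]
  have h1 : coeff 1 F = 1 := by
    have := hc 0
    rw [add_mul, one_mul, map_add, coeff_zero_X_mul, coeff_derivative, add_zero,
      coeff_zero_eq_constantCoeff, hF0] at this
    simpa using this
  have hsucc : ∀ m : ℕ, coeff (m+2) F * ((m:ℚ)+2) = -((m:ℚ)) * coeff (m+1) F := by
    intro m
    have := hc (m+1)
    rw [add_mul, one_mul, map_add, coeff_succ_X_mul, coeff_derivative, coeff_derivative] at this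
    push_cast at this
    linarith [this]
  have hzero : ∀ m : ℕ, coeff (m+2) F = 0 := by
    intro m
    induction m with
    | zero =>
      have := hsucc 0
      push_cast at this
      have h2 : ((0:ℚ)+2) ≠ 0 := by norm_num
      field_simp at this
      linarith [this]
    | succ k ih =>
      have := hsucc (k+1)
      rw [ih] at this
      push_cast at this
      have h2 : ((k:ℚ)+1+2) ≠ 0 := by positivity
      rw [mul_zero] at this
      have h3 : coeff (k+1+2) F * ((k:ℚ)+1+2) = 0 := by linarith [this]
      rcases mul_eq_zero.mp h3 with h | h
      · exact h
      · exact absurd h h2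
  ext m
  match m with
  | 0 => rw [coeff_zero_eq_constantCoeff, hF0, map_add, map_one, constantCoeff_X, add_zero]
  | 1 => rw [h1, map_add, coeff_one, PowerSeries.coeff_X]; norm_num
  | (m+2) =>
    rw [hzero m, map_add, coeff_one, PowerSeries.coeff_X, if_neg (by omega), if_neg (by omega)]
    norm_num

theorem comp_L_E1 : comp L E1 = X := by
  have hG0 : constantCoeff (comp L E1) = 0 := by
    rw [← coeff_zero_eq_constantCoeff, coeff_comp]
    simp [coeff_L]
  have hDL : comp ((1 + X) * d⁄dX ℚ L) E1 = 1 := by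
    rw [one_add_X_mul_deriv_L, comp_one]
  have hsplit : comp ((1 + X) * d⁄dX ℚ L) E1 = (1 + E1) * comp (d⁄dX ℚ L) E1 := by
    have : ((1 + X) : ℚ⟦X⟧) * d⁄dX ℚ L = d⁄dX ℚ L + X * d⁄dX ℚ L := by ring
    rw [this, comp_add, comp_X_mul constantCoeff_E1, add_mul, one_mul]
  have hE : (1 : ℚ⟦X⟧) + E1 = E := by rw [E1]; ring
  have hDG : d⁄dX ℚ (comp L E1) = 1 := by
    rw [derivative_comp constantCoeff_E1, deriv_E1]
    rw [hE] at hsplit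
    rw [hsplit] at hDL
    exact hDL
  ext m
  match m with
  | 0 => rw [coeff_zero_eq_constantCoeff, hG0, constantCoeff_X]
  | (m+1) =>
    have := congrArg (coeff m) hDG
    rw [coeff_derivative, coeff_one] at this
    rw [PowerSeries.coeff_X]
    have hm1 : ((m:ℚ)+1) ≠ 0 := by positivity
    match m with
    | 0 =>
      norm_num
      norm_num at this
      simpa using this
    | (k+1) =>
      rw [if_neg (by omega)]
      have h0 : ((k:ℚ)+1+1) ≠ 0 := by positivity
      have : coeff (k+1+1) (comp L E1) * ((k:ℚ)+1+1) = 0 := by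
        push_cast at this ⊢
        simpa using this
      rcases mul_eq_zero.mp this with h | h
      · exact h
      · exact absurd h h0

end NCPS
namespace NC
variable {n : ℕ}

open PowerSeries

theorem ev_comp {h : A n} (hZ : h [] = 0) {Q : ℚ⟦X⟧} (hQ : constantCoeff Q = 0) (P : ℚ⟦X⟧) :
    ev h (NCPS.comp P Q) = ev (ev h Q) P := by
  funext w
  set N := w.length with hN
  have hZQ : (ev h Q) [] = 0 := by rw [ev_nil, hQ]
  rw [ev_apply, ev_apply]
  have L1 : ∀ m ∈ Finset.range (N+1),
      (coeff m (NCPS.comp P Q)) * (h ^ m) w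
        = ∑ k ∈ Finset.range (N+1), (coeff k P) * (coeff m (Q ^ k)) * (h ^ m) w := by
    intro m hm
    rw [Finset.mem_range] at hm
    rw [NCPS.coeff_comp_stable hQ P (N := N+1) (by omega), Finset.sum_mul]
  rw [Finset.sum_congr rfl L1]
  have R1 : ∀ k ∈ Finset.range (N+1),
      (coeff k P) * ((ev h Q) ^ k) w
        = ∑ m ∈ Finset.range (N+1), (coeff k P) * (coeff m (Q ^ k)) * (h ^ m) w := by
    intro k _
    rw [← ev_pow hZ, ev_apply, Finset.mul_sum]
    exact Finset.sum_congr rfl fun m _ => by ring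
  rw [Finset.sum_congr rfl R1]
  rw [Finset.sum_comm]

theorem exp_eq_ev (f : NC n) : NC.exp f = ev f NCPS.E := by
  funext w
  erw [NC.exp, ev_apply]
  refine Finset.sum_congr rfl ?_
  intro k _
  erw [NCPS.coeff_E, pow_eq]

theorem log_eq_ev (g : NC n) : NC.log g = ev (NC.sub g one) NCPS.L := by
  funext w
  erw [NC.log, ev_apply]
  refine Finset.sum_congr rfl ?_
  intro k _
  erw [NCPS.coeff_L, pow_eq]

theorem exp_nil (f : NC n) : NC.exp f [] = 1 := by
  erw [exp_eq_ev, ev_nil, NCPS.constantCoeff_E]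

theorem log_nil (g : NC n) : NC.log g [] = 0 := by
  erw [log_eq_ev, ev_nil, NCPS.constantCoeff_L]

theorem mul_nil (f g : A n) : (f * g) [] = f [] * g [] := by
  erw [A_mul_def, mul_apply]
  simp

theorem exp_log {g : NC n} (hg : g [] = 1) : NC.exp (NC.log g) = g := by
  have hZ : (NC.sub g one) [] = 0 := by
    show g [] - NC.one [] = 0
    simp [NC.one, hg]
  erw [log_eq_ev, exp_eq_ev, ← ev_comp hZ NCPS.constantCoeff_L, NCPS.comp_E_L]
  erw [ev_add, ev_one, ev_X hZ]
  funext w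
  show NC.one w + (g w - NC.one w) = g w
  ring

theorem log_exp {f : NC n} (hf : f [] = 0) : NC.log (NC.exp f) = f := by
  have h1 : NC.sub (NC.exp f) one = ev f NCPS.E1 := by
    have h2 : ev f NCPS.E = (1 : A n) + ev f NCPS.E1 := by
      have : NCPS.E = 1 + NCPS.E1 := by rw [NCPS.E1]; ring
      erw [this, ev_add, ev_one]
    have h3 : NC.sub (NC.exp f) one = (ev f NCPS.E - 1 : A n) := by
      funext w
      show NC.exp f w - NC.one w = ev f NCPS.E w - NC.one w
      rw [exp_eq_ev]
    rw [h3, h2, add_sub_cancel_left]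
  rw [log_eq_ev, h1, ← ev_comp hf NCPS.constantCoeff_E1, NCPS.comp_L_E1, ev_X hf]

end NC
namespace NC
variable {n : ℕ}

open PowerSeries

/-- Explicit cast into the ring `A n`. -/
def toA (f : NC n) : A n := f

theorem toA_ev (h : A n) (P : ℚ⟦X⟧) : toA (ev h P) = ev h P := rfl

theorem E_eq : NCPS.E = PowerSeries.exp ℚ := by
  ext k
  rw [NCPS.coeff_E, PowerSeries.coeff_exp]
  simp [one_div]

theorem smul_apply (q : ℚ) (f : NC n) (w : List (Fin n)) : smul q f w = q * f w := rfl

theorem mul_smul_smul (q r : ℚ) (f g : NC n) :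
    NC.mul (smul q f) (smul r g) = smul (q * r) (NC.mul f g) := by
  funext w
  rw [mul_apply, smul_apply, mul_apply, Finset.mul_sum]
  refine Finset.sum_congr rfl fun k _ => ?_
  rw [smul_apply, smul_apply]
  ring

theorem pow_smul (q : ℚ) (f : NC n) : ∀ k : ℕ, NC.pow (smul q f) k = smul (q ^ k) (NC.pow f k)
  | 0 => by
      funext w
      rw [NC.pow, pow_zero, smul_apply, one_mul]
      rfl
  | k + 1 => by
      show NC.mul (smul q f) (NC.pow (smul q f) k) = smul (q ^ (k+1)) (NC.mul f (NC.pow f k))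
      rw [pow_smul q f k, mul_smul_smul]
      congr 1
      ring

theorem exp_smul_eq (q : ℚ) (f : NC n) :
    toA (NC.exp (smul q f)) = ev f (rescale q (PowerSeries.exp ℚ)) := by
  funext w
  show NC.exp (smul q f) w = _
  erw [NC.exp, ev_apply]
  refine Finset.sum_congr rfl fun k _ => ?_
  erw [coeff_rescale, ← E_eq, NCPS.coeff_E, pow_smul, smul_apply, ← pow_eq]
  ring

theorem exp_smul_mul {f : NC n} (hf : f [] = 0) (q r : ℚ) :
    toA (NC.exp (smul q f)) * toA (NC.exp (smul r f)) = toA (NC.exp (smul (q + r) f)) := by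
  rw [exp_smul_eq, exp_smul_eq, exp_smul_eq, ← PowerSeries.exp_mul_exp_eq_exp_add q r]
  exact (ev_mul hf _ _).symm

theorem smul_one_eq (f : NC n) : smul 1 f = f := by
  funext w; rw [smul_apply, one_mul]

theorem exp_smul_zero (f : NC n) : toA (NC.exp (smul 0 f)) = (1 : A n) := by
  rw [exp_smul_eq, rescale_zero]
  show ev f ((PowerSeries.C) ((constantCoeff) (PowerSeries.exp ℚ))) = 1
  rw [constantCoeff_exp]
  have : (PowerSeries.C) (1:ℚ) = 1 := map_one _
  erw [this, ev_one]

theorem neg_eq_smul (f : NC n) : NC.neg f = smul (-1) f := by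
  funext w; rw [smul_apply]; show -f w = _; ring

theorem exp_mul_exp_neg {f : NC n} (hf : f [] = 0) :
    toA (NC.exp f) * toA (NC.exp (NC.neg f)) = 1 := by
  have h1 : toA (NC.exp (smul 1 f)) * toA (NC.exp (smul (-1) f))
      = toA (NC.exp (smul (1 + -1) f)) := exp_smul_mul hf 1 (-1)
  calc toA (NC.exp f) * toA (NC.exp (NC.neg f))
      = toA (NC.exp (smul 1 f)) * toA (NC.exp (smul (-1) f)) := by
        rw [smul_one_eq, ← neg_eq_smul]
    _ = toA (NC.exp (smul (1 + -1) f)) := h1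
    _ = toA (NC.exp (smul 0 f)) := by norm_num
    _ = 1 := exp_smul_zero f

theorem exp_neg_mul_exp {f : NC n} (hf : f [] = 0) :
    toA (NC.exp (NC.neg f)) * toA (NC.exp f) = 1 := by
  have h1 : toA (NC.exp (smul (-1) f)) * toA (NC.exp (smul 1 f))
      = toA (NC.exp (smul (-1 + 1) f)) := exp_smul_mul hf (-1) 1
  calc toA (NC.exp (NC.neg f)) * toA (NC.exp f)
      = toA (NC.exp (smul (-1) f)) * toA (NC.exp (smul 1 f)) := by
        rw [smul_one_eq, ← neg_eq_smul]
    _ = toA (NC.exp (smul (-1 + 1) f)) := h1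
    _ = toA (NC.exp (smul 0 f)) := by norm_num
    _ = 1 := exp_smul_zero f

theorem exp_sq {f : NC n} (hf : f [] = 0) :
    toA (NC.exp f) * toA (NC.exp f) = toA (NC.exp (smul 2 f)) := by
  calc toA (NC.exp f) * toA (NC.exp f)
      = toA (NC.exp (smul 1 f)) * toA (NC.exp (smul 1 f)) := by rw [smul_one_eq]
    _ = toA (NC.exp (smul (1+1) f)) := exp_smul_mul hf 1 1
    _ = toA (NC.exp (smul 2 f)) := by norm_num

theorem exp_inj {f g : NC n} (hf : f [] = 0) (hg : g [] = 0)
    (h : NC.exp f = NC.exp g) : f = g := by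
  rw [← log_exp hf, ← log_exp hg, h]

theorem exp_inj' {f g : NC n} (hf : f [] = 0) (hg : g [] = 0)
    (h : toA (NC.exp f) = toA (NC.exp g)) : f = g :=
  exp_inj hf hg h

theorem exp_bch (f g : NC n) :
    toA (NC.exp (NC.bch f g)) = toA (NC.exp f) * toA (NC.exp g) := by
  have h1 : NC.mul (NC.exp f) (NC.exp g) [] = 1 := by
    rw [mul_apply]
    simp [exp_nil]
  show toA (NC.exp (NC.log (NC.mul (NC.exp f) (NC.exp g)))) = _
  rw [exp_log h1]
  exact (A_mul_def _ _).symm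

theorem bch_nil (f g : NC n) : NC.bch f g [] = 0 := log_nil _

theorem neg_nil {f : NC n} (hf : f [] = 0) : NC.neg f [] = 0 := by
  show -f [] = 0; rw [hf, neg_zero]

theorem smul_nil (q : ℚ) {f : NC n} (hf : f [] = 0) : smul q f [] = 0 := by
  rw [smul_apply, hf, mul_zero]

theorem X_nil (i : Fin n) : NC.X i [] = 0 := by
  show (if ([] : List (Fin n)) = [i] then (1:ℚ) else 0) = 0
  simp

theorem bch_neg_rev {f g : NC n} (hf : f [] = 0) (hg : g [] = 0) :
    NC.neg (NC.bch f g) = NC.bch (NC.neg g) (NC.neg f) := by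
  apply exp_inj' (neg_nil (bch_nil f g)) (bch_nil _ _)
  rw [exp_bch]
  have hb : NC.bch f g [] = 0 := bch_nil f g
  have h1 : toA (NC.exp (NC.bch f g)) * (toA (NC.exp (NC.neg g)) * toA (NC.exp (NC.neg f))) = 1 := by
    rw [exp_bch, mul_assoc, ← mul_assoc (toA (NC.exp g)), exp_mul_exp_neg hg, one_mul,
      exp_mul_exp_neg hf]
  exact left_inv_eq_right_inv (exp_neg_mul_exp hb) h1

end NC
namespace NC
variable {n : ℕ}

theorem toA_mul (s t : NC n) : toA (NC.mul s t) = toA s * toA t := rfl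

theorem mul_nil' (s t : NC n) : NC.mul s t [] = s [] * t [] := by
  rw [mul_apply]; simp

theorem smul_smul_eq (q r : ℚ) (f : NC n) : smul q (smul r f) = smul (q * r) f := by
  funext w; rw [smul_apply, smul_apply, smul_apply]; ring

theorem neg_smul_comm (q : ℚ) (f : NC n) : NC.neg (smul q f) = smul q (NC.neg f) := by
  funext w
  show -(smul q f w) = _
  rw [smul_apply, smul_apply]
  show -(q * f w) = q * (-(f w))
  ring

end NC

theorem mu2_neg' :
    NC.mu2 (NC.neg (NC.X (0 : Fin 2))) (NC.neg (NC.X 1))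
      = NC.neg (NC.mu2 (NC.X 0) (NC.X 1)) := by
  open NC in
  set x := NC.X (0 : Fin 2) with hxdef
  set y := NC.X (1 : Fin 2) with hydef
  have hx : x [] = 0 := NC.X_nil 0
  have hy : y [] = 0 := NC.X_nil 1
  have hnx : NC.neg x [] = 0 := NC.neg_nil hx
  have hny : NC.neg y [] = 0 := NC.neg_nil hy
  rw [NC.mu2, NC.mu2]
  have hnn : NC.neg (NC.neg x) = x := by
    funext w; show -(-(x w)) = x w; ring
  rw [hnn]
  set a : NC 2 := NC.smul (1/2) (NC.bch x (NC.neg y)) with ha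
  set c : NC 2 := NC.smul (1/2) (NC.bch (NC.neg x) y) with hc
  have hZa : a [] = 0 := NC.smul_nil _ (NC.bch_nil _ _)
  have hZc : c [] = 0 := NC.smul_nil _ (NC.bch_nil _ _)
  have hnegc : NC.neg c = NC.smul (1/2) (NC.bch (NC.neg y) x) := by
    rw [hc, NC.neg_smul_comm, NC.bch_neg_rev hnx hy, hnn]
  set b : NC 2 := NC.smul (1/2) (NC.bch (NC.neg y) x) with hb
  have hZb : b [] = 0 := NC.smul_nil _ (NC.bch_nil _ _)
  have hstep1 : NC.neg (NC.bch x c) = NC.bch b (NC.neg x) := by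
    rw [NC.bch_neg_rev hx hZc, hnegc]
  rw [hstep1]
  -- now: bch (neg x) a = bch b (neg x)
  apply NC.exp_inj (NC.bch_nil _ _) (NC.bch_nil _ _)
  suffices htoA : NC.toA (NC.exp (NC.bch (NC.neg x) a)) = NC.toA (NC.exp (NC.bch b (NC.neg x))) by
    exact htoA
  rw [NC.exp_bch, NC.exp_bch]
  -- conjugation argument
  set u : NC 2 := NC.mul (NC.mul (NC.exp (NC.neg x)) (NC.exp a)) (NC.exp x) with hu
  have hu1 : u [] = 1 := by
    rw [hu, NC.mul_nil', NC.mul_nil', NC.exp_nil, NC.exp_nil, NC.exp_nil]; ring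
  set b' : NC 2 := NC.log u with hb'
  have hZb' : b' [] = 0 := NC.log_nil _
  have hexpb' : NC.toA (NC.exp b')
      = NC.toA (NC.exp (NC.neg x)) * NC.toA (NC.exp a) * NC.toA (NC.exp x) := by
    rw [hb', NC.exp_log hu1, hu, NC.toA_mul, NC.toA_mul]
  have h2a : NC.smul 2 a = NC.bch x (NC.neg y) := by
    have h12 : (2:ℚ) * (1/2) = 1 := by norm_num
    rw [ha, NC.smul_smul_eq, h12, NC.smul_one_eq]
  have h2b : NC.smul 2 b = NC.bch (NC.neg y) x := by
    have h12 : (2:ℚ) * (1/2) = 1 := by norm_num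
    rw [hb, NC.smul_smul_eq, h12, NC.smul_one_eq]
  have key : NC.toA (NC.exp (NC.smul 2 b')) = NC.toA (NC.exp (NC.smul 2 b)) := by
    rw [← NC.exp_sq hZb', hexpb']
    calc (NC.toA (NC.exp (NC.neg x)) * NC.toA (NC.exp a) * NC.toA (NC.exp x))
          * (NC.toA (NC.exp (NC.neg x)) * NC.toA (NC.exp a) * NC.toA (NC.exp x))
        = NC.toA (NC.exp (NC.neg x)) * ((NC.toA (NC.exp a) * ((NC.toA (NC.exp x)
            * NC.toA (NC.exp (NC.neg x))) * NC.toA (NC.exp a))) * NC.toA (NC.exp x)) := by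
          noncomm_ring
      _ = NC.toA (NC.exp (NC.neg x)) * ((NC.toA (NC.exp a) * NC.toA (NC.exp a)) * NC.toA (NC.exp x)) := by
          rw [NC.exp_mul_exp_neg hx, one_mul]
      _ = NC.toA (NC.exp (NC.neg x)) * (NC.toA (NC.exp (NC.smul 2 a)) * NC.toA (NC.exp x)) := by
          rw [NC.exp_sq hZa]
      _ = NC.toA (NC.exp (NC.neg x)) * (NC.toA (NC.exp (NC.bch x (NC.neg y))) * NC.toA (NC.exp x)) := by
          rw [h2a]
      _ = NC.toA (NC.exp (NC.neg x)) * ((NC.toA (NC.exp x) * NC.toA (NC.exp (NC.neg y))) * NC.toA (NC.exp x)) := by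
          rw [NC.exp_bch]
      _ = (NC.toA (NC.exp (NC.neg x)) * NC.toA (NC.exp x)) * (NC.toA (NC.exp (NC.neg y)) * NC.toA (NC.exp x)) := by
          noncomm_ring
      _ = NC.toA (NC.exp (NC.neg y)) * NC.toA (NC.exp x) := by
          rw [NC.exp_neg_mul_exp hx, one_mul]
      _ = NC.toA (NC.exp (NC.bch (NC.neg y) x)) := (NC.exp_bch _ _).symm
      _ = NC.toA (NC.exp (NC.smul 2 b)) := by rw [h2b]
  have hbb : b' = b := by
    have h2 : NC.smul 2 b' = NC.smul 2 b :=
      NC.exp_inj (NC.smul_nil 2 hZb') (NC.smul_nil 2 hZb) key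
    funext w
    have := congrArg (fun t => t w) h2
    simp only [NC.smul_apply] at this
    linarith
  calc NC.toA (NC.exp (NC.neg x)) * NC.toA (NC.exp a)
      = NC.toA (NC.exp (NC.neg x)) * NC.toA (NC.exp a) * (NC.toA (NC.exp x) * NC.toA (NC.exp (NC.neg x))) := by
        rw [NC.exp_mul_exp_neg hx, mul_one]
    _ = (NC.toA (NC.exp (NC.neg x)) * NC.toA (NC.exp a) * NC.toA (NC.exp x)) * NC.toA (NC.exp (NC.neg x)) := by
        noncomm_ring
    _ = NC.toA (NC.exp b') * NC.toA (NC.exp (NC.neg x)) := by rw [hexpb']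
    _ = NC.toA (NC.exp b) * NC.toA (NC.exp (NC.neg x)) := by rw [hbb]


/-- `μ₂(-x,-y) = -μ₂(x,y)`. -/
theorem mu2_neg :
    NC.mu2 (NC.neg (NC.X (0 : Fin 2))) (NC.neg (NC.X 1))
      = NC.neg (NC.mu2 (NC.X 0) (NC.X 1)) := by
  exact mu2_neg'
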